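/- Let {A^{(l)}}_{l∈ι} be a finite family of symmetric n×n matrices with nonnegative entries (edge weights a^{(l)}_{ij} ≥ 0), let Ω : ℝ → ℝ satisfy Ω(z) ≥ 0 for z ≥ 0, let κ_i > 0 for i = 1,…,n, and define Ψ̃(z) = Ω(|z|)/z for z ≠ 0 and Ψ̃(0) = 0. Let σ : [t₀,∞) → ι and let x : [t₀,∞) → ℝⁿ be differentiable with ẋ_i(t) = κ_i·Ψ̃(e_i(t)) for all i and all t ≥ t₀, where e_i(t) = Σ_{j=1}^n a^{(σ(t))}_{ij}·(x_j(t) − x_i(t)). Then t ↦ max_{1≤i≤n} x_i(t) is nonincreasing on [t₀,∞), t ↦ min_{1≤i≤n} x_i(t) is nondecreasing on [t₀,∞), and consequently V(t) = max_i x_i(t) − min_i x_i(t) is nonincreasing on [t₀,∞). -/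

import Mathlib

open Matrix

open Set Filter Topology


/-- If each coordinate is differentiable and at every time the derivative of any
coordinate attaining the maximum is nonpositive, then the max is nonincreasing. -/
lemma max_antitone {n : ℕ} (hne : (Finset.univ : Finset (Fin n)).Nonempty)
    (t₀ : ℝ) (x : ℝ → Fin n → ℝ) (d : ℝ → Fin n → ℝ)
    (hx : ∀ i t, t₀ ≤ t → HasDerivAt (fun s => x s i) (d t i) t)
    (hd : ∀ t, t₀ ≤ t → ∀ i, (∀ j, x t j ≤ x t i) → d t i ≤ 0) :
    ∀ s t, t₀ ≤ s → s ≤ t →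
      Finset.univ.sup' hne (x t) ≤ Finset.univ.sup' hne (x s) := by
  intro s t hs hst
  set F : ℝ → ℝ := fun u => Finset.univ.sup' hne (x u) with hF
  have hcont : ContinuousOn F (Icc s t) := by
    intro u hu
    have : ContinuousAt F u := by
      apply ContinuousAt.finset_sup'_apply hne
      intro i _
      exact (hx i u (hs.trans hu.1)).continuousAt
    exact this.continuousWithinAt
  have key : ∀ ⦃u⦄, u ∈ Icc s t → F u ≤ F s := by
    apply image_le_of_liminf_slope_right_le_deriv_boundary
      (B := fun _ => F s) (B' := fun _ => 0) hcont le_rfl continuousOn_const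
      (fun u _ => (hasDerivAt_const u (F s)).hasDerivWithinAt)
    intro u hu r hr
    by_contra hcon
    rw [Filter.not_frequently] at hcon
    have hcon' : ∀ᶠ z in 𝓝[>] u, r ≤ slope F u z := hcon.mono fun z hz => not_lt.1 hz
    have hattain : ∀ᶠ z in 𝓝[>] u, ∃ i, x z i = F z := by
      filter_upwards with z
      obtain ⟨i, _, hi⟩ := Finset.exists_mem_eq_sup' hne (x z)
      exact ⟨i, hi.symm⟩
    -- pigeonhole: some fixed index attains the max frequently
    have hfreq : ∃ i, ∃ᶠ z in 𝓝[>] u, r ≤ slope F u z ∧ x z i = F z := by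
      by_contra hall
      push_neg at hall
      replace hall : ∀ i, ∀ᶠ z in 𝓝[>] u, ¬(r ≤ slope F u z ∧ x z i = F z) :=
        fun i => (hall i).mono fun z hz => by tauto
      have : ∀ᶠ z in 𝓝[>] u, ∀ i, ¬(r ≤ slope F u z ∧ x z i = F z) :=
        Filter.eventually_all.2 hall
      have : ∀ᶠ z in 𝓝[>] u, False := by
        filter_upwards [this, hcon', hattain] with z h1 h2 ⟨i, h3⟩
        exact h1 i ⟨h2, h3⟩
      exact (nhdsGT_neBot u).ne' (Filter.empty_mem_iff_bot.1
        (by simpa [Filter.eventually_iff] using this))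
    obtain ⟨i, hi⟩ := hfreq
    have hi' : ∃ᶠ z in 𝓝[>] u, (r ≤ slope F u z ∧ x z i = F z) ∧ z ∈ Ioi u :=
      hi.and_eventually (eventually_mem_nhdsWithin)
    obtain ⟨zs, hzs, hzsp⟩ := Filter.exists_seq_forall_of_frequently hi'
    have hzu : Filter.Tendsto zs atTop (𝓝 u) := hzs.mono_right nhdsWithin_le_nhds
    have hut : t₀ ≤ u := hs.trans hu.1
    -- i attains the max at u by continuity
    have hmax : ∀ j, x u j ≤ x u i := by
      intro j
      have hj : ∀ k, x (zs k) j ≤ x (zs k) i := by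
        intro k
        rw [(hzsp k).1.2]
        exact Finset.le_sup' (x (zs k)) (Finset.mem_univ j)
      exact le_of_tendsto_of_tendsto
        (((hx j u hut).continuousAt.tendsto).comp hzu)
        (((hx i u hut).continuousAt.tendsto).comp hzu)
        (Filter.Eventually.of_forall hj)
    have hdi : d u i ≤ 0 := hd u hut i hmax
    -- slope of coordinate i tends to d u i < r
    have hslope : Filter.Tendsto (slope (fun w => x w i) u) (𝓝[>] u) (𝓝 (d u i)) :=
      (hasDerivAt_iff_tendsto_slope.1 (hx i u hut)).mono_left
        (nhdsWithin_mono u fun z hz => ne_of_gt hz)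
    have hev : ∀ᶠ k in atTop, slope (fun w => x w i) u (zs k) < r :=
      (hslope.comp hzs).eventually (Filter.Tendsto.eventually_lt_const (lt_of_le_of_lt hdi hr) tendsto_id)
    obtain ⟨k, hk⟩ := hev.exists
    -- but slope F u (zs k) ≤ slope (x · i) u (zs k)
    have hz : u < zs k := (hzsp k).2
    have h1 : r ≤ slope F u (zs k) := (hzsp k).1.1
    have h2 : slope F u (zs k) ≤ slope (fun w => x w i) u (zs k) := by
      rw [slope_def_field, slope_def_field]
      have hnum : F (zs k) - F u ≤ x (zs k) i - x u i := by
        have h3 : x u i ≤ F u := Finset.le_sup' (x u) (Finset.mem_univ i)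
        have h4 : F (zs k) = x (zs k) i := ((hzsp k).1.2).symm
        linarith
      exact div_le_div_of_nonneg_right hnum (sub_pos.2 hz).le |>.trans_eq rfl
    exact absurd hk (not_lt.2 (h1.trans h2))
  exact key (right_mem_Icc.2 hst)


/-- For the switched dynamics ẋᵢ = κᵢΨ̃(eᵢ) with
eᵢ = Σⱼ a^{(σ(t))}_{ij}(xⱼ − xᵢ), Ψ̃(z) = Ω(|z|)/z for z ≠ 0 and Ψ̃(0) = 0, where the
weight matrices are symmetric with nonnegative entries, Ω ≥ 0 on [0,∞) and κᵢ > 0,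
the maximum of the states is nonincreasing, the minimum is nondecreasing, and
V(t) = maxᵢ xᵢ(t) − minᵢ xᵢ(t) is nonincreasing on [t₀,∞). -/
theorem stmt17 {ι : Type} [Fintype ι] {n : ℕ}
    (hne : (Finset.univ : Finset (Fin n)).Nonempty)
    (A : ι → Matrix (Fin n) (Fin n) ℝ)
    (hAsymm : ∀ l, (A l).IsSymm) (hAnonneg : ∀ l i j, 0 ≤ A l i j)
    (Ω : ℝ → ℝ) (hΩ : ∀ z : ℝ, 0 ≤ z → 0 ≤ Ω z)
    (κ : Fin n → ℝ) (hκ : ∀ i, 0 < κ i)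
    (Ψ : ℝ → ℝ) (hΨ0 : Ψ 0 = 0) (hΨ : ∀ z : ℝ, z ≠ 0 → Ψ z = Ω |z| / z)
    (σ : ℝ → ι) (t₀ : ℝ) (x : ℝ → Fin n → ℝ)
    (hx : ∀ i, ∀ t, t₀ ≤ t →
      HasDerivAt (fun s => x s i)
        (κ i * Ψ (∑ j, A (σ t) i j * (x t j - x t i))) t) :
    (∀ s t, t₀ ≤ s → s ≤ t →
      Finset.univ.sup' hne (x t) ≤ Finset.univ.sup' hne (x s)) ∧
    (∀ s t, t₀ ≤ s → s ≤ t →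
      Finset.univ.inf' hne (x s) ≤ Finset.univ.inf' hne (x t)) ∧
    (∀ s t, t₀ ≤ s → s ≤ t →
      Finset.univ.sup' hne (x t) - Finset.univ.inf' hne (x t) ≤
        Finset.univ.sup' hne (x s) - Finset.univ.inf' hne (x s)) := by
  have hodd : ∀ z : ℝ, Ψ (-z) = - Ψ z := by
    intro z
    rcases eq_or_ne z 0 with rfl | hz
    · simp [hΨ0]
    · rw [hΨ _ (neg_ne_zero.2 hz), hΨ _ hz, abs_neg, div_neg]
  have hsign : ∀ (w : Fin n → ℝ) (l : ι) (i : Fin n), (∀ j, w j ≤ w i) →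
      κ i * Ψ (∑ j, A l i j * (w j - w i)) ≤ 0 := by
    intro w l i hi
    set e := ∑ j, A l i j * (w j - w i) with he
    have hele : e ≤ 0 := Finset.sum_nonpos fun j _ =>
      mul_nonpos_of_nonneg_of_nonpos (hAnonneg l i j) (sub_nonpos.2 (hi j))
    have hΨe : Ψ e ≤ 0 := by
      rcases hele.lt_or_eq with hlt | heq
      · rw [hΨ e hlt.ne]
        exact div_nonpos_of_nonneg_of_nonpos (hΩ _ (abs_nonneg e)) hlt.le
      · rw [heq, hΨ0]
    exact mul_nonpos_of_nonneg_of_nonpos (hκ i).le hΨe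
  have hmax := max_antitone hne t₀ x
    (fun t i => κ i * Ψ (∑ j, A (σ t) i j * (x t j - x t i))) hx
    (fun t ht i hi => hsign (x t) (σ t) i hi)
  set y : ℝ → Fin n → ℝ := fun t i => - x t i with hy
  have hy' : ∀ i t, t₀ ≤ t → HasDerivAt (fun s => y s i)
      (κ i * Ψ (∑ j, A (σ t) i j * (y t j - y t i))) t := by
    intro i t ht
    have hsum : ∑ j, A (σ t) i j * (y t j - y t i)
        = -∑ j, A (σ t) i j * (x t j - x t i) := by
      rw [← Finset.sum_neg_distrib]
      apply Finset.sum_congr rfl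
      intro j _
      simp [hy]; ring
    rw [hsum, hodd]
    have := (hx i t ht).neg
    refine this.congr_deriv ?_
    ring
  have hmin := max_antitone hne t₀ y
    (fun t i => κ i * Ψ (∑ j, A (σ t) i j * (y t j - y t i))) hy'
    (fun t ht i hi => hsign (y t) (σ t) i hi)
  have hinf : ∀ u : ℝ, Finset.univ.inf' hne (x u) = - Finset.univ.sup' hne (y u) := by
    intro u
    apply le_antisymm
    · rw [le_neg]
      apply Finset.sup'_le
      intro i _
      show - x u i ≤ - Finset.univ.inf' hne (x u)
      exact neg_le_neg (Finset.inf'_le (x u) (Finset.mem_univ i))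
    · apply Finset.le_inf'
      intro i _
      rw [neg_le]
      exact Finset.le_sup' (y u) (Finset.mem_univ i)
  refine ⟨fun s t hs hst => hmax s t hs hst, ?_, ?_⟩
  · intro s t hs hst
    rw [hinf s, hinf t, neg_le_neg_iff]
    exact hmin s t hs hst
  · intro s t hs hst
    have h1 := hmax s t hs hst
    have h2 : Finset.univ.inf' hne (x s) ≤ Finset.univ.inf' hne (x t) := by
      rw [hinf s, hinf t, neg_le_neg_iff]
      exact hmin s t hs hst
    linarith
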